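/- Derivative of the negative part of the double-exponential tail: Let ν be a Borel measure on ℝ such that ν((−∞, y]) < ∞ and ∫_{(−∞, y]} e^x dν(x) < ∞ for every y < 0. Define φ(y) = ∫_{(−∞, y]} (e^y − e^x) dν(x) for y < 0. If z < 0 satisfies ν({z}) = 0, then φ is differentiable at z with φ′(z) = e^z · ν((−∞, z]). -/

import Mathlib

open MeasureTheory Real Set

/-- Derivative of the negative part of the double-exponential tail: if `ν` is a Borel
measure on `ℝ` with `ν((−∞, y]) < ∞` and `∫_{(−∞, y]} e^x dν(x) < ∞` for every
`y < 0`, and `φ(y) = ∫_{(−∞, y]} (e^y − e^x) dν(x)` for `y < 0`, then at every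
`z < 0` with `ν({z}) = 0` the function `φ` is differentiable with
`φ′(z) = e^z ν((−∞, z])`. -/
theorem deriv_neg_double_exponential_tail (ν : Measure ℝ)
    (hfin : ∀ y < (0 : ℝ), ν (Iic y) < ⊤)
    (hint : ∀ y < (0 : ℝ), IntegrableOn (fun x => exp x) (Iic y) ν)
    (z : ℝ) (hz : z < 0) (hatom : ν {z} = 0) :
    HasDerivAt (fun y => ∫ x in Iic y, (exp y - exp x) ∂ν)
      (exp z * (ν (Iic z)).toReal) z := by
  set c := z / 2 with hc
  have hzc : z < c := by rw [hc]; linarith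
  have hc0 : c < 0 := by rw [hc]; linarith
  have hνc : ν (Iic c) < ⊤ := hfin c hc0
  haveI : IsFiniteMeasure (ν.restrict (Iic c)) :=
    ⟨by rwa [Measure.restrict_apply_univ]⟩
  set μ := ν.restrict (Iic c) with hμ
  -- the modified family
  set F : ℝ → ℝ → ℝ := fun y x => max (exp y - exp x) 0 with hF
  set F' : ℝ → ℝ := (Iic z).indicator (fun _ => exp z) with hF'
  have hball : Metric.ball z (-z) ⊆ Iio 0 := by
    intro y hy
    rw [Metric.mem_ball, Real.dist_eq, abs_lt] at hy
    exact mem_Iio.mpr (by linarith [hy.2])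
  have key : Integrable F' μ ∧
      HasDerivAt (fun y => ∫ x, F y x ∂μ) (∫ x, F' x ∂μ) z := by
    apply hasDerivAt_integral_of_dominated_loc_of_lip (bound := fun _ => (1 : ℝ))
      (s := Metric.ball z (-z)) (Metric.ball_mem_nhds z (by linarith))
    · filter_upwards with y
      exact (Continuous.max (by continuity) continuous_const).aestronglyMeasurable
    · -- integrability of F z
      have h1 : Integrable (fun x => exp z - exp x) μ :=
        (integrable_const _).sub (hint c hc0)
      have : Integrable ((Iic z).indicator (fun x => exp z - exp x)) μ :=
        h1.indicator measurableSet_Iic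
      apply this.congr
      filter_upwards with x
      by_cases hx : x ≤ z
      · simp [hF, indicator_of_mem (mem_Iic.mpr hx),
          max_eq_left (sub_nonneg.mpr (exp_le_exp.mpr hx))]
      · push_neg at hx
        simp [hF, indicator_of_notMem (by simpa using hx.not_ge : x ∉ Iic z),
          max_eq_right (sub_nonpos.mpr (exp_le_exp.mpr hx.le))]
    · exact (measurable_const.indicator measurableSet_Iic).aestronglyMeasurable
    · -- Lipschitz
      filter_upwards with x
      have hlip1 : LipschitzOnWith 1 (fun y => exp y - exp x) (Metric.ball z (-z)) := by
        refine (convex_ball z (-z)).lipschitzOnWith_of_nnnorm_hasDerivWithin_le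
          (f' := fun y => exp y)
          (fun y _ => ((Real.hasDerivAt_exp y).sub_const (exp x)).hasDerivWithinAt)
          (fun y hy => ?_)
        have h1 : exp y ≤ 1 := by
          rw [← Real.exp_zero]
          exact exp_le_exp.mpr (le_of_lt (hball hy))
        rw [← NNReal.coe_le_coe, coe_nnnorm, Real.norm_eq_abs,
          abs_of_nonneg (exp_nonneg y)]
        exact h1
      have hmax : LipschitzWith 1 (fun t : ℝ => max t 0) :=
        LipschitzWith.id.max_const 0
      have h2 := hmax.comp_lipschitzOnWith hlip1
      have h3 : LipschitzOnWith 1 (fun y => F y x) (Metric.ball z (-z)) := by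
        simpa [hF, Function.comp_def] using h2
      rw [show (Real.nnabs (1 : ℝ)) = 1 by simp]
      exact h3
    · exact integrable_const _
    · -- a.e. differentiability
      have hz0 : μ {z} = 0 := le_antisymm (hatom ▸ Measure.restrict_le_self _) bot_le
      have haene : ∀ᵐ x ∂μ, x ≠ z := by
        rw [ae_iff]
        simp only [ne_eq, not_not, setOf_eq_eq_singleton]
        exact hz0
      filter_upwards [haene] with x hx
      rcases lt_or_gt_of_ne hx with hlt | hgt
      · -- x < z
        have : HasDerivAt (fun y => exp y - exp x) (exp z) z :=
          (Real.hasDerivAt_exp z).sub_const (exp x)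
        have heq : (fun y => F y x) =ᶠ[nhds z] fun y => exp y - exp x := by
          filter_upwards [Ioi_mem_nhds hlt] with y hy
          exact max_eq_left (sub_nonneg.mpr (exp_le_exp.mpr (le_of_lt hy)))
        have hd := this.congr_of_eventuallyEq heq
        have : F' x = exp z := by
          simp [hF', indicator_of_mem (mem_Iic.mpr hlt.le)]
        rw [this]; exact hd
      · -- x > z
        have : HasDerivAt (fun _ : ℝ => (0 : ℝ)) 0 z := hasDerivAt_const _ _
        have heq : (fun y => F y x) =ᶠ[nhds z] fun _ => (0 : ℝ) := by
          filter_upwards [Iio_mem_nhds hgt] with y hy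
          exact max_eq_right (sub_nonpos.mpr (exp_le_exp.mpr (le_of_lt hy)))
        have hd := this.congr_of_eventuallyEq heq
        have : F' x = 0 := by
          simp [hF', indicator_of_notMem (by simpa using hgt.not_ge : x ∉ Iic z)]
        rw [this]; exact hd
  obtain ⟨-, hderiv⟩ := key
  -- compute the derivative value
  have hval : (∫ x, F' x ∂μ) = exp z * (ν (Iic z)).toReal := by
    rw [hμ, hF', integral_indicator measurableSet_Iic]
    rw [Measure.restrict_restrict measurableSet_Iic]
    rw [Iic_inter_Iic, min_eq_left hzc.le, setIntegral_const, smul_eq_mul, mul_comm]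
    rfl
  rw [hval] at hderiv
  -- eventual equality of the two functions near z
  apply hderiv.congr_of_eventuallyEq
  filter_upwards [Iio_mem_nhds hzc] with y hy
  have : (fun x => F y x) = (Iic y).indicator (fun x => exp y - exp x) := by
    funext x
    by_cases hx : x ≤ y
    · simp [hF, indicator_of_mem (mem_Iic.mpr hx),
        max_eq_left (sub_nonneg.mpr (exp_le_exp.mpr hx))]
    · push_neg at hx
      simp [hF, indicator_of_notMem (by simpa using hx.not_ge : x ∉ Iic y),
        max_eq_right (sub_nonpos.mpr (exp_le_exp.mpr hx.le))]
  rw [this, hμ, integral_indicator measurableSet_Iic,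
    Measure.restrict_restrict measurableSet_Iic, Iic_inter_Iic, min_eq_left hy.le]
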